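/- arXiv:2303.06883 — 2 statements merged into one kernel-verified Lean document; each statement's English description precedes it below -/
import Mathlib

section
/- Let R be a commutative ring, ι a finite index set, and a : ι → R a family of elements such that aᵢ² = 0 for every i ∈ ι. Then for every natural number n, (∑_{i ∈ ι} aᵢ)ⁿ = n! · ∑_{S ⊆ ι, |S| = n} ∏_{i ∈ S} aᵢ, where the outer sum on the right runs over all subsets S of ι of cardinality n. -/
/-- If `a i ^ 2 = 0` for every `i` in a finite index set, then
`(∑ i, a i) ^ n = n! • ∑_{S ⊆ ι, |S| = n} ∏_{i ∈ S} a i`. -/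
theorem sum_pow_eq_factorial_smul_sum_powersetCard
    {R : Type*} [CommRing R] {ι : Type*} [Fintype ι]
    (a : ι → R) (ha : ∀ i, a i ^ 2 = 0) (n : ℕ) :
    (∑ i, a i) ^ n =
      Nat.factorial n • ∑ S ∈ Finset.powersetCard n (Finset.univ : Finset ι),
        ∏ i ∈ S, a i := by
  classical
  induction n with
  | zero => simp
  | succ n ih =>
    rw [pow_succ, ih, smul_mul_assoc, Finset.sum_mul]
    have key : (∑ S ∈ Finset.powersetCard n (Finset.univ : Finset ι),
        (∏ i ∈ S, a i) * ∑ i, a i)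
        = (n + 1) • ∑ S ∈ Finset.powersetCard (n + 1) (Finset.univ : Finset ι),
            ∏ i ∈ S, a i := by
      have step1 : (∑ S ∈ Finset.powersetCard n (Finset.univ : Finset ι),
          (∏ i ∈ S, a i) * ∑ i, a i)
          = ∑ S ∈ Finset.powersetCard n (Finset.univ : Finset ι),
              ∑ i ∈ Finset.univ \ S, ∏ j ∈ insert i S, a j := by
        refine Finset.sum_congr rfl fun S hS => ?_
        rw [Finset.mul_sum]
        rw [← Finset.sum_subset (Finset.sdiff_subset (s := Finset.univ) (t := S))]
        · refine Finset.sum_congr rfl fun i hi => ?_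
          have hiS : i ∉ S := (Finset.mem_sdiff.mp hi).2
          rw [Finset.prod_insert hiS, mul_comm]
        · intro i _ hi
          have hiS : i ∈ S := by
            by_contra h
            exact hi (Finset.mem_sdiff.mpr ⟨Finset.mem_univ i, h⟩)
          rw [← Finset.mul_prod_erase S a hiS]
          have : a i * (a i * ∏ j ∈ S.erase i, a j) = a i ^ 2 * ∏ j ∈ S.erase i, a j := by
            ring
          rw [mul_comm, this, ha, zero_mul]
      rw [step1, Finset.sum_sigma']
      have step2 : (∑ p ∈ (Finset.powersetCard n (Finset.univ : Finset ι)).sigma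
          (fun S => Finset.univ \ S), ∏ j ∈ insert p.2 p.1, a j)
          = ∑ p ∈ (Finset.powersetCard (n + 1) (Finset.univ : Finset ι)).sigma
              (fun T => T), ∏ j ∈ p.1, a j := by
        refine Finset.sum_nbij' (fun p => ⟨insert p.2 p.1, p.2⟩)
          (fun p => ⟨p.1.erase p.2, p.2⟩) ?_ ?_ ?_ ?_ ?_
        · rintro ⟨S, i⟩ hp
          simp only [Finset.mem_sigma, Finset.mem_powersetCard_univ, Finset.mem_sdiff,
            Finset.mem_univ, true_and] at hp ⊢
          exact ⟨by rw [Finset.card_insert_of_notMem hp.2, hp.1], Finset.mem_insert_self _ _⟩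
        · rintro ⟨T, i⟩ hp
          simp only [Finset.mem_sigma, Finset.mem_powersetCard_univ, Finset.mem_sdiff,
            Finset.mem_univ, true_and] at hp ⊢
          exact ⟨by rw [Finset.card_erase_of_mem hp.2, hp.1]; rfl,
            Finset.notMem_erase _ _⟩
        · rintro ⟨S, i⟩ hp
          simp only [Finset.mem_sigma, Finset.mem_powersetCard_univ, Finset.mem_sdiff,
            Finset.mem_univ, true_and] at hp
          simp [Finset.erase_insert hp.2]
        · rintro ⟨T, i⟩ hp
          simp only [Finset.mem_sigma, Finset.mem_powersetCard_univ] at hp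
          simp [Finset.insert_erase hp.2]
        · rintro ⟨S, i⟩ _
          rfl
      rw [step2, Finset.sum_sigma, Finset.smul_sum]
      refine Finset.sum_congr rfl fun T hT => ?_
      simp [Finset.sum_const, (Finset.mem_powersetCard_univ.mp hT)]
    rw [key, smul_smul, Nat.factorial_succ, Nat.mul_comm]
end

section
/- Let R be a commutative ring, r and j natural numbers, x₁, …, x_r ∈ R and h ∈ R. Then ∑_{S ⊆ {1,…,r}, |S| = j} ∏_{i ∈ S} (xᵢ + h) = ∑_{l = 0}^{j} C(r − l, j − l) · h^{j−l} · ∑_{T ⊆ {1,…,r}, |T| = l} ∏_{i ∈ T} xᵢ, where C(·,·) denotes the binomial coefficient. In other words, the j-th elementary symmetric polynomial of the shifted family (x₁ + h, …, x_r + h) equals ∑_{l=0}^{j} C(r−l, j−l) e_l(x₁,…,x_r) h^{j−l}. -/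
open Finset

lemma count_supersets {r j : ℕ} (T : Finset (Fin r)) :
    ((Finset.powersetCard j (Finset.univ : Finset (Fin r))).filter (fun S => T ⊆ S)).card
      = if T.card ≤ j then Nat.choose (r - T.card) (j - T.card) else 0 := by
  split_ifs with hle
  · have key : ((Finset.powersetCard j (Finset.univ : Finset (Fin r))).filter
        (fun S => T ⊆ S)).card = (Finset.powersetCard (j - T.card)
          ((Finset.univ : Finset (Fin r)) \ T)).card := by
      apply Finset.card_bij (fun S _ => S \ T)
      · intro S hS
        simp only [Finset.mem_filter, Finset.mem_powersetCard] at hS ⊢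
        exact ⟨Finset.sdiff_subset_sdiff (Finset.subset_univ S) le_rfl,
          by rw [Finset.card_sdiff_of_subset hS.2, hS.1.2]⟩
      · intro S hS S' hS' hEq
        simp only [Finset.mem_filter] at hS hS'
        rw [← Finset.sdiff_union_of_subset hS.2, ← Finset.sdiff_union_of_subset hS'.2, hEq]
      · intro U hU
        simp only [Finset.mem_powersetCard] at hU
        have hdisj : Disjoint U T := Finset.disjoint_of_subset_left hU.1 Finset.sdiff_disjoint
        refine ⟨U ∪ T, ?_, ?_⟩
        · simp only [Finset.mem_filter, Finset.mem_powersetCard]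
          refine ⟨⟨Finset.subset_univ _, ?_⟩, Finset.subset_union_right⟩
          rw [Finset.card_union_of_disjoint hdisj, hU.2]
          have h1 := Finset.card_sdiff_of_subset (Finset.subset_univ T)
          have h2 : T.card ≤ (Finset.univ : Finset (Fin r)).card :=
            Finset.card_le_card (Finset.subset_univ T)
          omega
        · rw [Finset.union_sdiff_right, Finset.sdiff_eq_self_of_disjoint hdisj]
    rw [key, Finset.card_powersetCard, Finset.card_sdiff_of_subset (Finset.subset_univ T),
      Finset.card_univ, Fintype.card_fin]
  · rw [Finset.card_eq_zero, Finset.filter_eq_empty_iff]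
    intro S hS hTS
    rw [Finset.mem_powersetCard] at hS
    exact hle (hS.2 ▸ Finset.card_le_card hTS)

/-- The `j`-th elementary symmetric polynomial of the shifted family `(x₁ + h, …, x_r + h)`:
`∑_{|S|=j} ∏_{i∈S} (xᵢ + h) = ∑_{l=0}^{j} C(r−l, j−l) h^{j−l} ∑_{|T|=l} ∏_{i∈T} xᵢ`. -/
theorem esymm_shift_eq_sum_choose
    {R : Type*} [CommRing R] (r j : ℕ) (x : Fin r → R) (h : R) :
    ∑ S ∈ Finset.powersetCard j (Finset.univ : Finset (Fin r)), ∏ i ∈ S, (x i + h) =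
      ∑ l ∈ Finset.range (j + 1),
        (Nat.choose (r - l) (j - l) : R) * h ^ (j - l) *
          ∑ T ∈ Finset.powersetCard l (Finset.univ : Finset (Fin r)), ∏ i ∈ T, x i := by
  have key : ∀ S ∈ Finset.powersetCard j (Finset.univ : Finset (Fin r)),
      ∏ i ∈ S, (x i + h) = ∑ T ∈ S.powerset, (∏ i ∈ T, x i) * h ^ (j - T.card) := by
    intro S hS
    rw [Finset.mem_powersetCard] at hS
    rw [Finset.prod_add]
    refine Finset.sum_congr rfl fun T hT => ?_
    rw [Finset.mem_powerset] at hT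
    rw [Finset.prod_const, Finset.card_sdiff_of_subset hT, hS.2]
  rw [Finset.sum_congr rfl key]
  rw [Finset.sum_comm' (t' := (Finset.univ : Finset (Fin r)).powerset)
    (s' := fun T => (Finset.powersetCard j Finset.univ).filter (fun S => T ⊆ S))
    (by
      intro S T
      simp only [Finset.mem_powerset, Finset.mem_filter, Finset.mem_powersetCard]
      tauto)]
  have step2 : ∀ T ∈ (Finset.univ : Finset (Fin r)).powerset,
      (∑ S ∈ (Finset.powersetCard j Finset.univ).filter (fun S => T ⊆ S),
        (∏ i ∈ T, x i) * h ^ (j - T.card))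
      = (if T.card ≤ j then (Nat.choose (r - T.card) (j - T.card) : R) else 0) *
          h ^ (j - T.card) * (∏ i ∈ T, x i) := by
    intro T _
    rw [Finset.sum_const, nsmul_eq_mul, count_supersets]
    split_ifs <;> [ring; simp]
  rw [Finset.sum_congr rfl step2, Finset.sum_powerset]
  have hcard : ((Finset.univ : Finset (Fin r)).card) = r := by simp
  rw [hcard]
  have inner : ∀ l, ∑ T ∈ Finset.powersetCard l (Finset.univ : Finset (Fin r)),
      (if T.card ≤ j then (Nat.choose (r - T.card) (j - T.card) : R) else 0) *
        h ^ (j - T.card) * (∏ i ∈ T, x i)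
      = (if l ≤ j then (Nat.choose (r - l) (j - l) : R) else 0) * h ^ (j - l) *
          ∑ T ∈ Finset.powersetCard l (Finset.univ : Finset (Fin r)), ∏ i ∈ T, x i := by
    intro l
    rw [Finset.mul_sum]
    refine Finset.sum_congr rfl fun T hT => ?_
    rw [Finset.mem_powersetCard] at hT
    rw [hT.2]
  simp only [inner]
  -- Now both sides are sums over ranges; extend both to range (max r j + 1)
  set f : ℕ → R := fun l => (if l ≤ j then (Nat.choose (r - l) (j - l) : R) else 0) *
      h ^ (j - l) * ∑ T ∈ Finset.powersetCard l (Finset.univ : Finset (Fin r)), ∏ i ∈ T, x i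
    with hf
  have hzero_gt_r : ∀ l, r < l → f l = 0 := by
    intro l hl
    have : Finset.powersetCard l (Finset.univ : Finset (Fin r)) = ∅ := by
      rw [Finset.powersetCard_eq_empty]
      simpa using hl
    simp [hf, this]
  have hzero_gt_j : ∀ l, j < l → f l = 0 := by
    intro l hl
    simp [hf, Nat.not_le.mpr hl]
  have hL : ∑ l ∈ Finset.range (r + 1), f l = ∑ l ∈ Finset.range (max r j + 1), f l := by
    apply Finset.sum_subset
    · exact Finset.range_subset_range.mpr (by omega)
    · intro l hl hnl
      simp only [Finset.mem_range] at hl hnl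
      exact hzero_gt_r l (by omega)
  have hR : ∑ l ∈ Finset.range (j + 1), f l = ∑ l ∈ Finset.range (max r j + 1), f l := by
    apply Finset.sum_subset
    · exact Finset.range_subset_range.mpr (by omega)
    · intro l hl hnl
      simp only [Finset.mem_range] at hl hnl
      exact hzero_gt_j l (by omega)
  rw [hL, ← hR, hf]
  refine Finset.sum_congr rfl fun l hl => ?_
  rw [Finset.mem_range] at hl
  simp only
  rw [if_pos (by omega : l ≤ j)]
end
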